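/- Let F be a nontrivial union-closed separating family of subsets of [n] with n ≥ 2, and let x, y ∈ [n] be two distinct elements such that the number of sets of F containing x is at least the number containing y. Then x is contained in at least (1/(2^(n-2)+1))·|F| sets of F. -/

import Mathlib

theorem stmt_2 (n : ℕ) (hn : 2 ≤ n) (F : Finset (Finset (Fin n)))
    (hUC : ∀ A ∈ F, ∀ B ∈ F, A ∪ B ∈ F)
    (hNT : F.sup id = (Finset.univ : Finset (Fin n)))
    (hSep : ∀ x y : Fin n, x ≠ y →
      F.filter (fun S => x ∈ S) ≠ F.filter (fun S => y ∈ S))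
    (x y : Fin n) (hxy : x ≠ y)
    (hfreq : (F.filter (fun S => y ∈ S)).card ≤ (F.filter (fun S => x ∈ S)).card) :
    ((F.filter (fun S => x ∈ S)).card : ℝ) ≥ (1 / (2 ^ (n - 2) + 1)) * F.card := by
  obtain ⟨A, hA, hxA⟩ : ∃ A ∈ F, x ∈ A := by
    have : x ∈ F.sup id := by rw [hNT]; exact Finset.mem_univ x
    simpa using Finset.mem_sup.mp this
  obtain ⟨B, hB, hyB⟩ : ∃ B ∈ F, y ∈ B := by
    have : y ∈ F.sup id := by rw [hNT]; exact Finset.mem_univ y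
    simpa using Finset.mem_sup.mp this
  set Fx := F.filter (fun S => x ∈ S) with hFxdef
  have hAFx : A ∈ Fx := Finset.mem_filter.mpr ⟨hA, hxA⟩
  have hABF : A ∪ B ∈ F := hUC A hA B hB
  have hABFx : A ∪ B ∈ Fx :=
    Finset.mem_filter.mpr ⟨hABF, Finset.mem_union_left _ hxA⟩
  have hk2 : 2 ≤ Fx.card := by
    by_contra h
    push_neg at h
    have h1 : Fx.card = 1 :=
      le_antisymm (Nat.lt_succ_iff.mp h) (Finset.card_pos.mpr ⟨A, hAFx⟩)
    obtain ⟨a, ha⟩ := Finset.card_eq_one.mp h1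
    have hAa : A = a := by
      have := hAFx; rw [ha] at this; simpa using this
    have hABa : A ∪ B = a := by
      have := hABFx; rw [ha] at this; simpa using this
    have hyA : y ∈ A := by
      have hmem : y ∈ A ∪ B := Finset.mem_union_right _ hyB
      rw [hABa, ← hAa] at hmem; exact hmem
    have hAFy : A ∈ F.filter (fun S => y ∈ S) := Finset.mem_filter.mpr ⟨hA, hyA⟩
    have hy1 : (F.filter (fun S => y ∈ S)).card = 1 :=
      le_antisymm (hfreq.trans h1.le) (Finset.card_pos.mpr ⟨A, hAFy⟩)
    obtain ⟨b, hb⟩ := Finset.card_eq_one.mp hy1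
    have hAb : A = b := by
      rw [hb] at hAFy; simpa using hAFy
    exact hSep x y hxy (by rw [← hFxdef, ha, hb, ← hAa, ← hAb])
  have hsplit : F.card ≤ Fx.card + 2 ^ (n - 1) := by
    have hcard : Fx.card + (F.filter (fun S => x ∉ S)).card = F.card :=
      Finset.card_filter_add_card_filter_not (fun S => x ∈ S)
    rw [← hcard]
    have : (F.filter fun S => x ∉ S).card ≤ 2 ^ (n - 1) := by
      calc (F.filter fun S => x ∉ S).card
          ≤ (({x}ᶜ : Finset (Fin n)).powerset).card := by
            apply Finset.card_le_card
            intro S hS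
            rw [Finset.mem_powerset]
            intro a haS
            rw [Finset.mem_compl, Finset.mem_singleton]
            rintro rfl
            exact (Finset.mem_filter.mp hS).2 haS
        _ = 2 ^ (n - 1) := by
            rw [Finset.card_powerset, Finset.card_compl, Finset.card_singleton,
              Fintype.card_fin]
    omega
  have hmain : F.card ≤ Fx.card * (2 ^ (n - 2) + 1) := by
    have h21 : 2 ^ (n - 1) = 2 * 2 ^ (n - 2) := by
      rw [← pow_succ']
      congr 1
      omega
    calc F.card ≤ Fx.card + 2 ^ (n - 1) := hsplit
      _ ≤ Fx.card + Fx.card * 2 ^ (n - 2) := by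
          rw [h21]; exact Nat.add_le_add_left (Nat.mul_le_mul hk2 le_rfl) _
      _ = Fx.card * (2 ^ (n - 2) + 1) := by ring
  have hpos : (0 : ℝ) < 2 ^ (n - 2) + 1 := by positivity
  have hR : (F.card : ℝ) ≤ (Fx.card : ℝ) * (2 ^ (n - 2) + 1) := by
    exact_mod_cast hmain
  rw [ge_iff_le, div_mul_eq_mul_div, one_mul, div_le_iff₀ hpos]
  linarith
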